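/- Let G=(N,E) be a finite simple undirected connected graph with n nodes and p edges, with incidence matrix D∈ℝ^{n×p} (for an arbitrary orientation of the edges). Let Ω=diag(μ_1,…,μ_n) and Σ=diag(σ_1,…,σ_p) be real diagonal matrices. If for every edge e_k=(i,j)∈E it holds that σ_k + μ_i + μ_j − (r_i−1)|μ_i| − (r_j−1)|μ_j| > 0, where r_i denotes the degree of node i, then the symmetric matrix M := DᵀΩD + Σ is positive definite. -/

import Mathlib

open Matrix

private lemma helper_key {p : ℕ} (S : Finset (Fin p)) (a : Fin p → ℝ) (μ : ℝ) :
    (μ - ((S.card : ℝ) - 1) * |μ|) * (∑ k ∈ S, (a k) ^ 2) ≤ μ * (∑ k ∈ S, a k) ^ 2 := by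
  have hT : (0:ℝ) ≤ ∑ k ∈ S, (a k) ^ 2 := Finset.sum_nonneg fun k _ => sq_nonneg _
  have hub : (∑ k ∈ S, a k) ^ 2 ≤ (S.card : ℝ) * ∑ k ∈ S, (a k) ^ 2 :=
    sq_sum_le_card_mul_sum_sq
  have hlb : (2 - (S.card : ℝ)) * (∑ k ∈ S, (a k) ^ 2) ≤ (∑ k ∈ S, a k) ^ 2 := by
    rcases le_or_gt 2 S.card with h2 | h2
    · have : (2 - (S.card : ℝ)) ≤ 0 := by
        have : (2:ℝ) ≤ (S.card : ℝ) := by exact_mod_cast h2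
        linarith
      nlinarith [sq_nonneg (∑ k ∈ S, a k)]
    · interval_cases h : S.card
      · rw [Finset.card_eq_zero] at h
        simp [h]
      · rw [Finset.card_eq_one] at h
        obtain ⟨k0, hk0⟩ := h
        simp [hk0]
        ring_nf
        simp
  rcases le_or_gt 0 μ with hμ | hμ
  · rw [abs_of_nonneg hμ]
    nlinarith
  · rw [abs_of_neg hμ]
    nlinarith

theorem stmt_0 {n p : ℕ} (G : SimpleGraph (Fin n)) [DecidableRel G.Adj]
    (hconn : G.Connected)
    (epos eneg : Fin p → Fin n)
    (hadj : ∀ k, G.Adj (epos k) (eneg k))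
    (hinj : Function.Injective (fun k : Fin p => s(epos k, eneg k)))
    (hsurj : ∀ a b : Fin n, G.Adj a b → ∃ k, s(epos k, eneg k) = s(a, b))
    (D : Matrix (Fin n) (Fin p) ℝ)
    (hD : ∀ i k, D i k =
      if i = epos k then 1 else if i = eneg k then -1 else 0)
    (μ : Fin n → ℝ) (σ : Fin p → ℝ)
    (hcond : ∀ k : Fin p,
      0 < σ k + μ (epos k) + μ (eneg k)
        - ((G.degree (epos k) : ℝ) - 1) * |μ (epos k)|
        - ((G.degree (eneg k) : ℝ) - 1) * |μ (eneg k)|) :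
    (Dᵀ * diagonal μ * D + diagonal σ).PosDef := by
  classical
  have hne : ∀ k, epos k ≠ eneg k := fun k => (hadj k).ne
  -- the incidence set of node i
  set S : Fin n → Finset (Fin p) :=
    fun i => Finset.univ.filter (fun k => epos k = i ∨ eneg k = i) with hS
  -- degree equals number of incident edges
  have hdeg : ∀ i, (S i).card = G.degree i := by
    intro i
    rw [← SimpleGraph.card_neighborFinset_eq_degree]
    apply Finset.card_bij (fun k _ => if epos k = i then eneg k else epos k)
    · intro k hk
      simp only [hS, Finset.mem_filter] at hk
      rcases hk.2 with h | h
      · simp only [h, if_pos rfl, SimpleGraph.mem_neighborFinset]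
        exact h ▸ hadj k
      · have hne' : epos k ≠ i := fun he => hne k (he.trans h.symm)
        simp only [if_neg hne', SimpleGraph.mem_neighborFinset]
        exact h ▸ (hadj k).symm
    · intro k hk l hl hkl
      have key : ∀ m, m ∈ S i → s(epos m, eneg m) =
          s(i, if epos m = i then eneg m else epos m) := by
        intro m hm
        simp only [hS, Finset.mem_filter] at hm
        rcases hm.2 with h | h
        · simp [h]
        · have hne' : epos m ≠ i := fun he => hne m (he.trans h.symm)
          simp only [if_neg hne']
          rw [← h]
          exact Sym2.eq_swap
      have heq : s(epos k, eneg k) = s(epos l, eneg l) := by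
        rw [key k hk, key l hl, hkl]
      exact hinj heq
    · intro j hj
      rw [SimpleGraph.mem_neighborFinset] at hj
      obtain ⟨k, hk⟩ := hsurj i j hj
      rw [Sym2.eq_iff] at hk
      rcases hk with ⟨h1, h2⟩ | ⟨h1, h2⟩
      · refine ⟨k, ?_, ?_⟩
        · simp [hS, h1]
        · simp [h1, h2]
      · have hne' : epos k ≠ i := fun he => hj.ne (he.symm.trans h1)
        refine ⟨k, ?_, ?_⟩
        · simp [hS, h2]
        · rw [if_neg hne']; exact h1
  -- D vanishes off S i, and is ±1 on S i
  have hDoff : ∀ i k, k ∉ S i → D i k = 0 := by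
    intro i k hk
    simp only [hS, Finset.mem_filter, Finset.mem_univ, true_and, not_or] at hk
    rw [hD]
    rw [if_neg (fun h => hk.1 h.symm), if_neg (fun h => hk.2 h.symm)]
  have hDsq : ∀ i k, k ∈ S i → (D i k) ^ 2 = 1 := by
    intro i k hk
    simp only [hS, Finset.mem_filter, Finset.mem_univ, true_and] at hk
    rw [hD]
    rcases hk with h | h
    · rw [if_pos h.symm]; norm_num
    · have : i ≠ epos k := fun he => hne k (he.symm.trans h.symm)
      rw [if_neg this, if_pos h.symm]; norm_num
  rw [posDef_iff_dotProduct_mulVec]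
  constructor
  · -- Hermitian
    have h1 : (diagonal μ).IsHermitian := isHermitian_diagonal μ
    have hDt : Dᴴ = Dᵀ := by ext i j; simp [conjTranspose_apply]
    have h2 : (Dᵀ * diagonal μ * D).IsHermitian := by
      rw [← hDt]
      exact isHermitian_conjTranspose_mul_mul D h1
    exact h2.add (isHermitian_diagonal σ)
  · intro x hx
    have hstar : star x = x := rfl
    rw [hstar]
    set y : Fin n → ℝ := D *ᵥ x with hy
    -- quadratic form identity
    have hquad : x ⬝ᵥ ((Dᵀ * diagonal μ * D + diagonal σ) *ᵥ x)
        = (∑ i, μ i * (y i) ^ 2) + ∑ k, σ k * (x k) ^ 2 := by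
      rw [add_mulVec, dotProduct_add]
      congr 1
      · rw [← mulVec_mulVec, ← mulVec_mulVec, dotProduct_mulVec, vecMul_transpose, ← hy]
        simp only [dotProduct, mulVec_diagonal]
        exact Finset.sum_congr rfl fun i _ => by ring
      · simp only [dotProduct, mulVec_diagonal]
        exact Finset.sum_congr rfl fun k _ => by ring
    rw [hquad]
    -- coefficient per node
    set c : Fin n → ℝ := fun i => μ i - ((G.degree i : ℝ) - 1) * |μ i| with hc
    have hnode : ∀ i, c i * (∑ k ∈ S i, (x k) ^ 2) ≤ μ i * (y i) ^ 2 := by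
      intro i
      have hy' : y i = ∑ k ∈ S i, D i k * x k := by
        rw [hy]
        simp only [mulVec, dotProduct]
        rw [hS]
        exact (Finset.sum_filter_of_ne (fun k _ hk => by
          by_contra hcon
          exact hk (by rw [hDoff i k (by simpa [hS] using hcon)]; ring))).symm
      have hxsq : ∑ k ∈ S i, (x k) ^ 2 = ∑ k ∈ S i, (D i k * x k) ^ 2 := by
        refine Finset.sum_congr rfl fun k hk => ?_
        rw [mul_pow, hDsq i k hk, one_mul]
      rw [hy', hxsq]
      have := helper_key (S i) (fun k => D i k * x k) (μ i)
      rwa [hdeg i] at this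
    -- sum over nodes, swap to sum over edges
    have hswap : ∑ i, c i * (∑ k ∈ S i, (x k) ^ 2)
        = ∑ k, (c (epos k) + c (eneg k)) * (x k) ^ 2 := by
      have : ∀ i, c i * (∑ k ∈ S i, (x k) ^ 2)
          = ∑ k, if epos k = i ∨ eneg k = i then c i * (x k) ^ 2 else 0 := by
        intro i
        rw [Finset.mul_sum, hS, Finset.sum_filter]
      rw [Finset.sum_congr rfl fun i _ => this i, Finset.sum_comm]
      refine Finset.sum_congr rfl fun k _ => ?_
      have hsplit : ∀ i : Fin n, (if epos k = i ∨ eneg k = i then c i * (x k) ^ 2 else 0)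
          = (if epos k = i then c i * (x k) ^ 2 else 0)
            + (if eneg k = i then c i * (x k) ^ 2 else 0) := by
        intro i
        by_cases h1 : epos k = i
        · by_cases h2 : eneg k = i
          · exact absurd (h1.trans h2.symm) (hne k)
          · simp [h1, h2]
        · by_cases h2 : eneg k = i <;> simp [h1, h2]
      rw [Finset.sum_congr rfl fun i _ => hsplit i, Finset.sum_add_distrib,
        Finset.sum_ite_eq, Finset.sum_ite_eq]
      simp [add_mul]
    -- conclude
    have hlow : ∑ k, (c (epos k) + c (eneg k)) * (x k) ^ 2 + ∑ k, σ k * (x k) ^ 2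
        ≤ (∑ i, μ i * (y i) ^ 2) + ∑ k, σ k * (x k) ^ 2 := by
      rw [← hswap]
      exact add_le_add_left (Finset.sum_le_sum fun i _ => hnode i) _
    have hpos : 0 < ∑ k, (c (epos k) + c (eneg k)) * (x k) ^ 2 + ∑ k, σ k * (x k) ^ 2 := by
      rw [← Finset.sum_add_distrib]
      obtain ⟨k0, hk0⟩ := Function.ne_iff.mp hx
      simp only [Pi.zero_apply] at hk0
      refine Finset.sum_pos' (fun k _ => ?_) ⟨k0, Finset.mem_univ k0, ?_⟩
      · have h := hcond k
        have : 0 ≤ c (epos k) + c (eneg k) + σ k := by rw [hc]; simp only; linarith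
        nlinarith [sq_nonneg (x k)]
      · have h := hcond k0
        have hcoef : 0 < c (epos k0) + c (eneg k0) + σ k0 := by rw [hc]; simp only; linarith
        have hxk : 0 < (x k0) ^ 2 := pow_pos (abs_pos.mpr hk0) 2 |>.trans_le (by rw [sq_abs])
        nlinarith
    exact lt_of_lt_of_le hpos hlow
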